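/- Let φ : ℝ → ℝ be a bijective function homogeneous in the 0-limit with associated triple (1, d₀, s ↦ φ̄₀·s^[d₀]) where φ̄₀ ≠ 0 and d₀ > 0. Then the inverse function φ⁻¹ is homogeneous in the 0-limit with associated triple (1, 1/d₀, s ↦ (s/φ̄₀)^[1/d₀]). -/

import Mathlib

noncomputable def sgnPow (w r : ℝ) : ℝ := Real.sign w * |w| ^ r

lemma sgnPow_zero' (r : ℝ) : sgnPow 0 r = 0 := by simp [sgnPow]

lemma sgnPow_of_pos {x : ℝ} (r : ℝ) (hx : 0 < x) : sgnPow x r = x ^ r := by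
  simp [sgnPow, Real.sign_of_pos hx, abs_of_pos hx]

lemma sgnPow_of_neg {x : ℝ} (r : ℝ) (hx : x < 0) : sgnPow x r = -((-x) ^ r) := by
  simp [sgnPow, Real.sign_of_neg hx, abs_of_neg hx]

lemma sgnPow_one' (x : ℝ) : sgnPow x 1 = x := by
  rcases lt_trichotomy x 0 with h | rfl | h
  · rw [sgnPow_of_neg 1 h, Real.rpow_one]; ring
  · simp [sgnPow_zero']
  · rw [sgnPow_of_pos 1 h, Real.rpow_one]

lemma sgnPow_one_base (r : ℝ) : sgnPow 1 r = 1 := by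
  simp [sgnPow_of_pos r one_pos]

lemma sgnPow_ne_zero {x : ℝ} (r : ℝ) (hx : x ≠ 0) : sgnPow x r ≠ 0 := by
  rcases lt_or_gt_of_ne hx with h | h
  · rw [sgnPow_of_neg r h]
    have : (0:ℝ) < (-x) ^ r := Real.rpow_pos_of_pos (by linarith) r
    intro hc; nlinarith
  · rw [sgnPow_of_pos r h]
    exact (Real.rpow_pos_of_pos h r).ne'

lemma sgnPow_sgnPow (x a b : ℝ) : sgnPow (sgnPow x a) b = sgnPow x (a * b) := by
  rcases lt_trichotomy x 0 with h | rfl | h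
  · rw [sgnPow_of_neg a h, sgnPow_of_neg b, sgnPow_of_neg (a*b) h, neg_neg,
      ← Real.rpow_mul (by linarith)]
    have : (0:ℝ) < (-x) ^ a := Real.rpow_pos_of_pos (by linarith) a
    linarith
  · simp [sgnPow_zero']
  · rw [sgnPow_of_pos a h, sgnPow_of_pos b (Real.rpow_pos_of_pos h a),
      sgnPow_of_pos (a*b) h, ← Real.rpow_mul h.le]

lemma sgnPow_strictMono {r : ℝ} (hr : 0 < r) : StrictMono (fun x => sgnPow x r) := by
  have key : ∀ x y : ℝ, 0 ≤ x → x < y → sgnPow x r < sgnPow y r := by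
    intro x y hx hxy
    have hy : 0 < y := lt_of_le_of_lt hx hxy
    rw [sgnPow_of_pos r hy]
    rcases eq_or_lt_of_le hx with rfl | hx'
    · rw [sgnPow_zero']; exact Real.rpow_pos_of_pos hy r
    · rw [sgnPow_of_pos r hx']; exact Real.rpow_lt_rpow hx hxy hr
  intro x y hxy
  rcases le_or_gt 0 x with hx | hx
  · exact key x y hx hxy
  · simp only
    rcases le_or_gt 0 y with hy | hy
    · rw [sgnPow_of_neg r hx]
      have h1 : (0:ℝ) < (-x) ^ r := Real.rpow_pos_of_pos (by linarith) r
      have h2 : 0 ≤ sgnPow y r := by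
        rcases eq_or_lt_of_le hy with rfl | hy'
        · simp [sgnPow_zero']
        · rw [sgnPow_of_pos r hy']; exact (Real.rpow_pos_of_pos hy' r).le
      linarith
    · rw [sgnPow_of_neg r hx, sgnPow_of_neg r hy]
      have := Real.rpow_lt_rpow (by linarith : (0:ℝ) ≤ -y) (by linarith : -y < -x) hr
      linarith

lemma sgnPow_continuous {r : ℝ} (hr : 0 < r) : Continuous (fun x => sgnPow x r) := by
  rw [continuous_iff_continuousAt]
  intro x
  rcases lt_trichotomy x 0 with hx | rfl | hx
  · have hev : ∀ᶠ y in nhds x, (fun z => -((-z) ^ r)) y = sgnPow y r := by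
      filter_upwards [eventually_lt_nhds hx] with y hy
      rw [sgnPow_of_neg r hy]
    refine ContinuousAt.congr ?_ hev
    exact (((Real.continuousAt_rpow_const (-x) r (Or.inl (by linarith))).comp
      (continuous_neg.continuousAt))).neg
  · have h0 : sgnPow 0 r = 0 := sgnPow_zero' r
    rw [ContinuousAt, h0]
    have hb : Filter.Tendsto (fun y : ℝ => |y| ^ r) (nhds 0) (nhds 0) := by
      have : ContinuousAt (fun z : ℝ => z ^ r) 0 :=
        Real.continuousAt_rpow_const 0 r (Or.inr hr.le)
      have h2 : ContinuousAt ((fun z : ℝ => z ^ r) ∘ abs) 0 :=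
        ContinuousAt.comp (x := (0:ℝ)) (by simpa using this)
          continuous_abs.continuousAt
      simpa [Real.zero_rpow hr.ne', ContinuousAt, Function.comp_def] using h2
    refine squeeze_zero_norm (fun y => ?_) hb
    have : |Real.sign y| ≤ 1 := by
      rcases lt_trichotomy y 0 with h | rfl | h
      · simp [Real.sign_of_neg h]
      · simp
      · simp [Real.sign_of_pos h]
    have h2 : (0:ℝ) ≤ |y| ^ r := Real.rpow_nonneg (abs_nonneg y) r
    calc ‖sgnPow y r‖ = |Real.sign y| * |y| ^ r := by
          rw [Real.norm_eq_abs, sgnPow, abs_mul, abs_of_nonneg h2]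
      _ ≤ 1 * |y| ^ r := by nlinarith
      _ = |y| ^ r := one_mul _
  · have hev : ∀ᶠ y in nhds x, (fun z : ℝ => z ^ r) y = sgnPow y r := by
      filter_upwards [eventually_gt_nhds hx] with y hy
      rw [sgnPow_of_pos r hy]
    exact ContinuousAt.congr (Real.continuousAt_rpow_const x r (Or.inl hx.ne')) hev

/-- Scalar version: `ζ : ℝ → ℝ` is homogeneous in the 0-limit with triple `(r, d, ζ₀)`. -/
def Homog0S (r d : ℝ) (ζ ζ₀ : ℝ → ℝ) : Prop :=
  Continuous ζ ∧ Continuous ζ₀ ∧ ζ₀ ≠ 0 ∧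
    ∀ C : Set ℝ, IsCompact C → (0:ℝ) ∉ C →
      ∀ ε > (0:ℝ), ∃ l₀ > (0:ℝ), ∀ s ∈ C, ∀ l : ℝ, 0 < l → l ≤ l₀ →
        |ζ (l ^ r * s) / l ^ d - ζ₀ s| ≤ ε

lemma key_pos (φ : ℝ → ℝ) (hbij : Function.Bijective φ)
    (c₀ d₀ : ℝ) (hc₀ : 0 < c₀) (hd₀ : 0 < d₀)
    (h : Homog0S 1 d₀ φ (fun s => c₀ * sgnPow s d₀)) :
    Homog0S 1 (1 / d₀) (Function.invFun φ) (fun s => sgnPow (s / c₀) (1 / d₀)) := by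
  obtain ⟨hφc, -, -, hφ⟩ := h
  have hd₀' : 0 < 1 / d₀ := by positivity
  -- φ is strictly monotone
  have hmono : StrictMono φ := by
    rcases hφc.strictMono_of_inj hbij.1 with hm | ha
    · exact hm
    · exfalso
      obtain ⟨l₀, hl₀, H⟩ := hφ {-1, 1} (Set.toFinite _).isCompact
        (by norm_num) (c₀ / 2) (by positivity)
      have hpow : (0:ℝ) < l₀ ^ d₀ := Real.rpow_pos_of_pos hl₀ d₀
      have h1 : |φ l₀ / l₀ ^ d₀ - c₀| ≤ c₀ / 2 := by
        simpa [Real.rpow_one, sgnPow_one_base] using H 1 (by norm_num) l₀ hl₀ le_rfl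
      have hsn : sgnPow (-1 : ℝ) d₀ = -1 := by
        rw [show ((-1:ℝ)) = -(1:ℝ) by ring, sgnPow_of_neg d₀ (by norm_num)]
        norm_num
      have h2 : |φ (l₀ * -1) / l₀ ^ d₀ - c₀ * -1| ≤ c₀ / 2 := by
        simpa [Real.rpow_one, hsn] using H (-1) (by norm_num) l₀ hl₀ le_rfl
      have hq1 : c₀ / 2 ≤ φ l₀ / l₀ ^ d₀ := by have := abs_le.mp h1; linarith [this.1]
      have hpos : 0 < φ l₀ := by
        have := mul_pos (lt_of_lt_of_le (half_pos hc₀) hq1) hpow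
        rwa [div_mul_cancel₀ _ hpow.ne'] at this
      have hq2 : φ (l₀ * -1) / l₀ ^ d₀ ≤ -(c₀ / 2) := by
        have := abs_le.mp h2; linarith [this.2]
      have hneg : φ (l₀ * -1) < 0 := by
        have := mul_neg_of_neg_of_pos
          (lt_of_le_of_lt hq2 (by linarith : -(c₀/2) < 0)) hpow
        rwa [div_mul_cancel₀ _ hpow.ne'] at this
      have : φ l₀ < φ (l₀ * -1) := ha (by nlinarith)
      linarith
  -- inverse function and its continuity
  set ψ := Function.invFun φ with hψdef
  have hlψ : ∀ x, ψ (φ x) = x := fun x => Function.leftInverse_invFun hbij.1 x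
  have hrψ : ∀ y, φ (ψ y) = y := fun y => Function.rightInverse_invFun hbij.2 y
  have hψc : Continuous ψ := by
    have he : ψ = ⇑(StrictMono.orderIsoOfSurjective φ hmono hbij.2).symm := by
      funext y
      apply hbij.1
      rw [hrψ]
      exact (StrictMono.orderIsoOfSurjective_self_symm_apply φ hmono hbij.2 y).symm
    rw [he]
    exact OrderIso.continuous _
  set h₀ : ℝ → ℝ := fun s => sgnPow (s / c₀) (1 / d₀) with hh₀def
  have hh₀c : Continuous h₀ := (sgnPow_continuous hd₀').comp (continuous_id.div_const c₀)
  have hinv : ∀ s : ℝ, c₀ * sgnPow (h₀ s) d₀ = s := by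
    intro s
    rw [hh₀def]
    simp only
    rw [sgnPow_sgnPow, one_div_mul_cancel hd₀.ne', sgnPow_one']
    field_simp
  refine ⟨hψc, hh₀c, ?_, ?_⟩
  · intro hz
    have := congrFun hz c₀
    simp only [hh₀def, Pi.zero_apply, div_self hc₀.ne', sgnPow_one_base] at this
    exact one_ne_zero (α := ℝ) this
  intro C hC hC0 ε hε
  rcases C.eq_empty_or_nonempty with rfl | hCne
  · exact ⟨1, one_pos, fun s hs => absurd hs (Set.notMem_empty s)⟩
  -- minimum of |h₀| on C
  obtain ⟨s₁, hs₁C, hs₁min⟩ := hC.exists_isMinOn hCne (continuous_abs.comp hh₀c).continuousOn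
  set m := |h₀ s₁| with hmdef
  have hm : 0 < m := by
    rw [hmdef]
    have : h₀ s₁ ≠ 0 := sgnPow_ne_zero _ (div_ne_zero (fun hc => hC0 (hc ▸ hs₁C)) hc₀.ne')
    exact abs_pos.mpr this
  set ε' := min ε (m / 2) with hε'def
  have hε'pos : 0 < ε' := lt_min hε (by positivity)
  have hε'le : ε' ≤ ε := min_le_left _ _
  have hε'lt : ∀ s ∈ C, ε' < |h₀ s| := by
    intro s hs
    calc ε' ≤ m / 2 := min_le_right _ _
      _ < m := by linarith
      _ ≤ |h₀ s| := hs₁min hs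
  -- the compact set K
  set K : Set ℝ := ((fun s => h₀ s + ε') '' C) ∪ ((fun s => h₀ s - ε') '' C) with hKdef
  have hKcomp : IsCompact K := (hC.image (hh₀c.add continuous_const)).union
    (hC.image (hh₀c.sub continuous_const))
  have hK0 : (0:ℝ) ∉ K := by
    rintro (⟨s, hs, hs0⟩ | ⟨s, hs, hs0⟩)
    · have hlt := hε'lt s hs
      simp only at hs0
      have he : h₀ s = -ε' := by linarith
      rw [he, abs_neg, abs_of_pos hε'pos] at hlt
      linarith
    · have hlt := hε'lt s hs
      simp only at hs0
      have he : h₀ s = ε' := by linarith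
      rw [he, abs_of_pos hε'pos] at hlt
      linarith
  -- the gap function
  have hgap : ∀ s ∈ C, s < c₀ * sgnPow (h₀ s + ε') d₀ ∧ c₀ * sgnPow (h₀ s - ε') d₀ < s := by
    intro s hs
    have h1 := (mul_lt_mul_iff_right₀ hc₀).mpr
      (sgnPow_strictMono hd₀ (show h₀ s < h₀ s + ε' by linarith))
    have h2 := (mul_lt_mul_iff_right₀ hc₀).mpr
      (sgnPow_strictMono hd₀ (show h₀ s - ε' < h₀ s by linarith))
    rw [hinv s] at h1 h2
    exact ⟨h1, h2⟩
  set g : ℝ → ℝ := fun s => min (c₀ * sgnPow (h₀ s + ε') d₀ - s) (s - c₀ * sgnPow (h₀ s - ε') d₀)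
    with hgdef
  have hgc : Continuous g := by
    apply Continuous.min
    · exact ((continuous_const.mul ((sgnPow_continuous hd₀).comp
        (hh₀c.add continuous_const))).sub continuous_id)
    · exact (continuous_id.sub (continuous_const.mul ((sgnPow_continuous hd₀).comp
        (hh₀c.sub continuous_const))))
  obtain ⟨s₂, hs₂C, hs₂min⟩ := hC.exists_isMinOn hCne hgc.continuousOn
  set δ := g s₂ with hδdef
  have hδ : 0 < δ := by
    have := hgap s₂ hs₂C
    rw [hδdef, hgdef]
    simp only [lt_min_iff]
    constructor <;> linarith [this.1, this.2]
  have hδle : ∀ s ∈ C, δ ≤ g s := fun s hs => hs₂min hs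
  -- apply hypothesis on K
  obtain ⟨l₀, hl₀, HK⟩ := hφ K hKcomp hK0 (δ / 2) (by positivity)
  refine ⟨l₀ ^ d₀, Real.rpow_pos_of_pos hl₀ d₀, ?_⟩
  intro s hs l hl hll
  set μ := l ^ (1 / d₀) with hμdef
  have hμpos : 0 < μ := Real.rpow_pos_of_pos hl _
  have hμd : μ ^ d₀ = l := by
    rw [hμdef, ← Real.rpow_mul hl.le, one_div_mul_cancel hd₀.ne', Real.rpow_one]
  have hμle : μ ≤ l₀ := by
    have h2 := Real.rpow_le_rpow hl.le hll (le_of_lt hd₀')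
    rwa [← Real.rpow_mul hl₀.le, mul_one_div, div_self hd₀.ne', Real.rpow_one] at h2
  have htpK : h₀ s + ε' ∈ K := Set.mem_union_left _ ⟨s, hs, rfl⟩
  have htmK : h₀ s - ε' ∈ K := Set.mem_union_right _ ⟨s, hs, rfl⟩
  have Ep := HK (h₀ s + ε') htpK μ hμpos hμle
  have Em := HK (h₀ s - ε') htmK μ hμpos hμle
  simp only [Real.rpow_one, hμd] at Ep Em
  have hδs : δ ≤ g s := hδle s hs
  have hδ1 : δ ≤ c₀ * sgnPow (h₀ s + ε') d₀ - s := hδs.trans (min_le_left _ _)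
  have hδ2 : δ ≤ s - c₀ * sgnPow (h₀ s - ε') d₀ := hδs.trans (min_le_right _ _)
  have hub : l * s < φ (μ * (h₀ s + ε')) := by
    have h1 := (abs_le.mp Ep).1
    have h2 : s < φ (μ * (h₀ s + ε')) / l := by linarith
    rw [lt_div_iff₀ hl] at h2
    calc l * s = s * l := mul_comm _ _
      _ < _ := h2
  have hlb : φ (μ * (h₀ s - ε')) < l * s := by
    have h1 := (abs_le.mp Em).2
    have h2 : φ (μ * (h₀ s - ε')) / l < s := by linarith
    rw [div_lt_iff₀ hl] at h2
    calc φ (μ * (h₀ s - ε')) < s * l := h2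
      _ = l * s := mul_comm _ _
  have hψub : ψ (l * s) < μ * (h₀ s + ε') :=
    hmono.lt_iff_lt.mp (by rw [hrψ]; exact hub)
  have hψlb : μ * (h₀ s - ε') < ψ (l * s) :=
    hmono.lt_iff_lt.mp (by rw [hrψ]; exact hlb)
  rw [Real.rpow_one, abs_le]
  constructor
  · have h2 : h₀ s - ε' < ψ (l * s) / μ := by
      rw [lt_div_iff₀ hμpos]
      calc (h₀ s - ε') * μ = μ * (h₀ s - ε') := mul_comm _ _
        _ < _ := hψlb
    linarith
  · have h2 : ψ (l * s) / μ < h₀ s + ε' := by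
      rw [div_lt_iff₀ hμpos]
      calc ψ (l * s) < μ * (h₀ s + ε') := hψub
        _ = (h₀ s + ε') * μ := mul_comm _ _
    linarith

lemma homog0S_comp_neg {d : ℝ} {ζ ζ₀ : ℝ → ℝ} (h : Homog0S 1 d ζ ζ₀) :
    Homog0S 1 d (fun s => ζ (-s)) (fun s => ζ₀ (-s)) := by
  obtain ⟨h1, h2, h3, h4⟩ := h
  refine ⟨h1.comp continuous_neg, h2.comp continuous_neg, ?_, ?_⟩
  · intro he
    apply h3
    funext s
    have := congrFun he (-s)
    simpa using this
  · intro C hC hC0 ε hε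
    obtain ⟨l₀, hl₀, H⟩ := h4 (Neg.neg '' C) (hC.image continuous_neg)
      (by rintro ⟨x, hx, hx0⟩; exact hC0 (by simpa [show x = 0 by linarith [hx0]] using hx))
      ε hε
    refine ⟨l₀, hl₀, fun s hs l hl hll => ?_⟩
    have := H (-s) ⟨s, hs, rfl⟩ l hl hll
    simpa [mul_neg] using this

/-- Inverse of a bijective function homogeneous in the 0-limit with triple
`(1, d₀, s ↦ φ̄₀ · s^[d₀])`. -/
theorem inverse_homog0 (φ : ℝ → ℝ) (hbij : Function.Bijective φ)
    (c₀ d₀ : ℝ) (hc₀ : c₀ ≠ 0) (hd₀ : 0 < d₀)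
    (h : Homog0S 1 d₀ φ (fun s => c₀ * sgnPow s d₀)) :
    Homog0S 1 (1 / d₀) (Function.invFun φ) (fun s => sgnPow (s / c₀) (1 / d₀)) := by
  rcases hc₀.lt_or_gt with hneg | hpos
  · -- reduce to -φ
    set φ' : ℝ → ℝ := fun x => -(φ x) with hφ'def
    have hbij' : Function.Bijective φ' := by
      constructor
      · intro a b hab
        exact hbij.1 (by simpa [hφ'def] using hab)
      · intro y
        obtain ⟨x, hx⟩ := hbij.2 (-y)
        exact ⟨x, by simp [hφ'def, hx]⟩
    have h' : Homog0S 1 d₀ φ' (fun s => (-c₀) * sgnPow s d₀) := by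
      obtain ⟨p1, p2, p3, p4⟩ := h
      refine ⟨p1.neg, ?_, ?_, ?_⟩
      · have := p2.neg
        exact this.congr (fun s => by rw [Pi.neg_apply]; ring)
      · intro he
        have := congrFun he 1
        simp only [Pi.zero_apply, sgnPow_one_base, mul_one] at this
        exact hc₀ (by linarith)
      · intro C hC hC0 ε hε
        obtain ⟨l₀, hl₀, H⟩ := p4 C hC hC0 ε hε
        refine ⟨l₀, hl₀, fun s hs l hl hll => ?_⟩
        have := H s hs l hl hll
        calc |φ' (l ^ (1:ℝ) * s) / l ^ d₀ - -c₀ * sgnPow s d₀|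
            = |-(φ (l ^ (1:ℝ) * s) / l ^ d₀ - c₀ * sgnPow s d₀)| := by
              rw [hφ'def]; ring_nf
          _ ≤ ε := by rw [abs_neg]; exact this
    have K := key_pos φ' hbij' (-c₀) d₀ (by linarith) hd₀ h'
    have K' := homog0S_comp_neg K
    have heq : Function.invFun φ = fun y => Function.invFun φ' (-y) := by
      funext y
      apply hbij.1
      rw [Function.rightInverse_invFun hbij.2 y]
      have := Function.rightInverse_invFun hbij'.2 (-y)
      rw [hφ'def] at this
      simp only at this
      linarith [this]
    have heq₀ : (fun s : ℝ => sgnPow (s / c₀) (1 / d₀))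
        = fun s : ℝ => sgnPow (-s / -c₀) (1 / d₀) := by
      funext s
      rw [neg_div_neg_eq]
    rw [heq, heq₀]
    exact K'
  · exact key_pos φ hbij c₀ d₀ hpos hd₀ h
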